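/- For 0 < θ < 1, the identities (sin(πθ)/2) ∫_{-∞}^∞ dt / (cosh(πt) - cos(πθ)) = 1 - θ and (sin(πθ)/2) ∫_{-∞}^∞ dt / (cosh(πt) + cos(πθ)) = θ hold. -/

import Mathlib

open MeasureTheory Set Real Filter
open scoped ENNReal

lemma tendsto_tanh_atTop' : Tendsto Real.tanh atTop (nhds 1) := by
  have h : ∀ x : ℝ, Real.tanh x = 1 - 2 / (Real.exp (2 * x) + 1) := by
    intro x
    rw [Real.tanh_eq_sinh_div_cosh, Real.sinh_eq, Real.cosh_eq]
    have h1 : (0:ℝ) < Real.exp x := Real.exp_pos x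
    have h2 : Real.exp (2 * x) = Real.exp x * Real.exp x := by
      rw [two_mul, Real.exp_add]
    have h3 : Real.exp (-x) = (Real.exp x)⁻¹ := Real.exp_neg x
    have h4 : (0:ℝ) < Real.exp (2 * x) + 1 := by positivity
    rw [h3, h2]
    field_simp
    ring
  have h2 : Tendsto (fun x : ℝ => 2 / (Real.exp (2 * x) + 1)) atTop (nhds 0) := by
    apply Tendsto.div_atTop (tendsto_const_nhds)
    have : Tendsto (fun x : ℝ => 2 * x) atTop atTop :=
      (tendsto_const_mul_atTop_of_pos two_pos).mpr tendsto_id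
    exact (Real.tendsto_exp_atTop.comp this).atTop_add tendsto_const_nhds
  have h3 : Tendsto (fun x : ℝ => 1 - 2 / (Real.exp (2 * x) + 1)) atTop (nhds 1) := by
    simpa using tendsto_const_nhds.sub h2
  exact h3.congr fun x => (h x).symm

lemma key17 (a : ℝ) (ha : a ∈ Ioo 0 π) :
    Real.sin a / 2 * ∫ t : ℝ, 1 / (Real.cosh (π * t) + Real.cos a) = a / π := by
  obtain ⟨ha0, haπ⟩ := ha
  have hpi := Real.pi_pos
  have hca : -1 < Real.cos a := by
    have := Real.cos_lt_cos_of_nonneg_of_le_pi ha0.le le_rfl haπ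
    rwa [Real.cos_pi] at this
  have hsa : 0 < Real.sin a := Real.sin_pos_of_pos_of_lt_pi ha0 haπ
  have hden : ∀ t : ℝ, 0 < Real.cosh (π * t) + Real.cos a := fun t => by
    nlinarith [Real.one_le_cosh (π * t)]
  set c := Real.tan (a / 2) with hc
  have hcs : 0 < Real.cos (a / 2) :=
    Real.cos_pos_of_mem_Ioo ⟨by linarith, by linarith⟩
  have hsn : 0 < Real.sin (a / 2) :=
    Real.sin_pos_of_pos_of_lt_pi (by linarith) (by linarith)
  set F : ℝ → ℝ := fun t => 2 / (π * Real.sin a) *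
    Real.arctan (c * (Real.sinh (π * t / 2) / Real.cosh (π * t / 2))) with hF
  have hderiv : ∀ t : ℝ, HasDerivAt F (1 / (Real.cosh (π * t) + Real.cos a)) t := by
    intro t
    set s := Real.sinh (π * t / 2) with hs
    set ch := Real.cosh (π * t / 2) with hch
    have hchpos : 0 < ch := Real.cosh_pos _
    have hinner : HasDerivAt (fun t : ℝ => π * t / 2) (π / 2) t := by
      simpa using ((hasDerivAt_id t).const_mul π).div_const 2
    have hsc : HasDerivAt (fun t : ℝ => Real.sinh (π * t / 2)) (ch * (π / 2)) t := hinner.sinh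
    have hcc : HasDerivAt (fun t : ℝ => Real.cosh (π * t / 2)) (s * (π / 2)) t := hinner.cosh
    have hq : HasDerivAt (fun t : ℝ => Real.sinh (π * t / 2) / Real.cosh (π * t / 2))
        ((ch * (π / 2) * ch - s * (s * (π / 2))) / ch ^ 2) t := hsc.div hcc hchpos.ne'
    have hq2 : (ch * (π / 2) * ch - s * (s * (π / 2))) / ch ^ 2 = π / 2 / ch ^ 2 := by
      have h1 : ch ^ 2 - s ^ 2 = 1 := Real.cosh_sq_sub_sinh_sq _
      field_simp
      nlinarith [h1]
    rw [hq2] at hq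
    have harc : HasDerivAt F
        (2 / (π * Real.sin a) * (1 / (1 + (c * (s / ch)) ^ 2) * (c * (π / 2 / ch ^ 2)))) t :=
      ((hq.const_mul c).arctan).const_mul _
    convert harc using 1
    have hcosh2 : Real.cosh (π * t) = ch ^ 2 + s ^ 2 := by
      rw [show π * t = 2 * (π * t / 2) by ring, Real.cosh_two_mul]
    have h1 : ch ^ 2 - s ^ 2 = 1 := Real.cosh_sq_sub_sinh_sq _
    have hpyth : Real.sin (a / 2) ^ 2 + Real.cos (a / 2) ^ 2 = 1 := Real.sin_sq_add_cos_sq _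
    have hcos : Real.cos a = Real.cos (a / 2) ^ 2 - Real.sin (a / 2) ^ 2 := by
      have h := Real.cos_two_mul' (a / 2); rw [show 2 * (a / 2) = a by ring] at h; exact h
    have hsin : Real.sin a = 2 * Real.sin (a / 2) * Real.cos (a / 2) := by
      have h := Real.sin_two_mul (a / 2); rw [show 2 * (a / 2) = a by ring] at h; exact h
    have hctan : c = Real.sin (a / 2) / Real.cos (a / 2) := Real.tan_eq_sin_div_cos _
    rw [hcosh2, hcos, hsin, hctan]
    have hden2 : 0 < ch ^ 2 + s ^ 2 + (Real.cos (a/2) ^ 2 - Real.sin (a/2) ^ 2) := by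
      rw [← hcos, ← hcosh2]; exact hden t
    have hdenom3 : (0:ℝ) < 1 + (Real.sin (a/2) / Real.cos (a/2) * (s / ch)) ^ 2 := by positivity
    field_simp
    linear_combination ((2 * Real.cos (a/2) ^ 2 - 1)) * h1 +
      ((2 * s ^ 2 + 1)) * hpyth
  have hlim : Tendsto F atTop (nhds (2 / (π * Real.sin a) * Real.arctan c)) := by
    have hT : Tendsto (fun t : ℝ => π * t / 2) atTop atTop :=
      (((tendsto_const_mul_atTop_of_pos hpi).mpr tendsto_id).atTop_div_const two_pos)
    have htanh : Tendsto (fun t : ℝ => Real.sinh (π * t / 2) / Real.cosh (π * t / 2))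
        atTop (nhds 1) :=
      (tendsto_tanh_atTop'.comp hT).congr (fun t => Real.tanh_eq_sinh_div_cosh _)
    have h5 := htanh.const_mul c
    have h6 := (Real.continuous_arctan.tendsto _).comp h5
    have h7 := h6.const_mul (2 / (π * Real.sin a))
    simpa using h7
  have hF0 : F 0 = 0 := by simp [hF]
  have harctan : Real.arctan c = a / 2 :=
    Real.arctan_tan (by linarith) (by linarith)
  have hint : ∫ t in Ioi (0:ℝ), 1 / (Real.cosh (π * t) + Real.cos a)
      = 2 / (π * Real.sin a) * (a / 2) := by
    rw [integral_Ioi_of_hasDerivAt_of_nonneg (hderiv 0).continuousAt.continuousWithinAt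
      (fun x _ => hderiv x) (fun x _ => (one_div_pos.mpr (hden x)).le) hlim, hF0, harctan]
    ring
  have heven : ∫ t : ℝ, 1 / (Real.cosh (π * t) + Real.cos a)
      = 2 * ∫ t in Ioi (0:ℝ), 1 / (Real.cosh (π * t) + Real.cos a) := by
    rw [← _root_.integral_comp_abs (f := fun x => 1 / (Real.cosh (π * x) + Real.cos a))]
    congr 1
    funext t
    rw [show π * |t| = |π * t| by rw [abs_mul, abs_of_pos hpi], Real.cosh_abs]
  rw [heven, hint]
  field_simp

theorem statement17 (θ : ℝ) (hθ : θ ∈ Ioo (0 : ℝ) 1) :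
    (Real.sin (π * θ) / 2 *
        ∫ t : ℝ, 1 / (Real.cosh (π * t) - Real.cos (π * θ))) = 1 - θ ∧
      (Real.sin (π * θ) / 2 *
        ∫ t : ℝ, 1 / (Real.cosh (π * t) + Real.cos (π * θ))) = θ := by
  obtain ⟨h0, h1⟩ := hθ
  have hpi := Real.pi_pos
  constructor
  · have hmem : π * (1 - θ) ∈ Ioo 0 π := ⟨by nlinarith, by nlinarith⟩
    have hkey := key17 (π * (1 - θ)) hmem
    have hsin : Real.sin (π * (1 - θ)) = Real.sin (π * θ) := by
      rw [show π * (1 - θ) = π - π * θ by ring, Real.sin_pi_sub]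
    have hcos : Real.cos (π * (1 - θ)) = -Real.cos (π * θ) := by
      rw [show π * (1 - θ) = π - π * θ by ring, Real.cos_pi_sub]
    rw [hsin, hcos] at hkey
    simp only [← sub_eq_add_neg] at hkey
    rw [hkey, mul_div_cancel_left₀ _ hpi.ne']
  · have hmem : π * θ ∈ Ioo 0 π := ⟨by nlinarith, by nlinarith⟩
    have hkey := key17 (π * θ) hmem
    rw [hkey, mul_div_cancel_left₀ _ hpi.ne']
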